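/- There are no real numbers θ₁, θ₂ such that exp(i·θ₁) and exp(i·θ₂) are primitive 9th roots of unity (i.e., θ₁, θ₂ ∈ {2πk/9 : gcd(k,9)=1}), 4(1−cos θ₁)(1−cos θ₂) is an integer, and 2(cos θ₁ + cos θ₂) is an integer. -/

import Mathlib

/-- If `e^{iθ}` is a primitive 9th root of unity, then `8 cos³θ − 6 cosθ + 1 = 0`. -/
lemma cos_cubic_of_prim9 (θ : ℝ) (h : IsPrimitiveRoot (Complex.exp (θ * Complex.I)) 9) :
    8 * Real.cos θ ^ 3 - 6 * Real.cos θ + 1 = 0 := by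
  have h9 : Complex.exp (θ * Complex.I) ^ 9 = 1 := h.pow_eq_one
  have hexp9 : Complex.exp (((9 * θ : ℝ)) * Complex.I) = 1 := by
    rw [show (((9 * θ : ℝ)) * Complex.I : ℂ) = (9:ℕ) * (θ * Complex.I) by push_cast; ring,
      Complex.exp_nat_mul, h9]
  have hcos9 : Real.cos (9 * θ) = 1 := by
    have := congrArg Complex.re hexp9
    rw [Complex.exp_ofReal_mul_I_re] at this
    simpa using this
  -- e^{3iθ} ≠ 1
  have h3 : Complex.exp (θ * Complex.I) ^ 3 ≠ 1 := by
    intro hc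
    have := h.dvd_of_pow_eq_one 3 hc
    norm_num at this
  have hcos3 : Real.cos (3 * θ) ≠ 1 := by
    intro hc
    apply h3
    have hsin : Real.sin (3 * θ) = 0 := by
      have := Real.sin_sq_add_cos_sq (3 * θ)
      nlinarith [this]
    have : Complex.exp (((3 * θ : ℝ)) * Complex.I) = 1 := by
      apply Complex.ext
      · rw [Complex.exp_ofReal_mul_I_re]; simpa using hc
      · rw [Complex.exp_ofReal_mul_I_im]; simpa using hsin
    rw [← this, ← Complex.exp_nat_mul]
    norm_num
    ring_nf
  -- cos(9θ) via triple angle twice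
  have t1 : Real.cos (3 * (3 * θ)) = 4 * Real.cos (3 * θ) ^ 3 - 3 * Real.cos (3 * θ) :=
    Real.cos_three_mul (3 * θ)
  have t2 : Real.cos (3 * θ) = 4 * Real.cos θ ^ 3 - 3 * Real.cos θ := Real.cos_three_mul θ
  have h93 : (9 : ℝ) * θ = 3 * (3 * θ) := by ring
  rw [h93] at hcos9
  set u := Real.cos (3 * θ) with hu
  have hfac : (u - 1) * (2 * u + 1) ^ 2 = 0 := by
    have : 4 * u ^ 3 - 3 * u = 1 := by rw [← t1, hcos9]
    linear_combination this
  have hu' : 2 * u + 1 = 0 := by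
    rcases mul_eq_zero.mp hfac with h1 | h2
    · exact absurd (by linarith [sub_eq_zero.mp h1] : u = 1) hcos3
    · exact pow_eq_zero_iff (n := 2) (by norm_num) |>.mp h2
  rw [t2] at hu'
  linarith

theorem stmt3 :
    ¬ ∃ θ₁ θ₂ : ℝ,
      IsPrimitiveRoot (Complex.exp (θ₁ * Complex.I)) 9 ∧
      IsPrimitiveRoot (Complex.exp (θ₂ * Complex.I)) 9 ∧
      (∃ z : ℤ, 4 * (1 - Real.cos θ₁) * (1 - Real.cos θ₂) = (z : ℝ)) ∧
      (∃ z : ℤ, 2 * (Real.cos θ₁ + Real.cos θ₂) = (z : ℝ)) := by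
  rintro ⟨θ₁, θ₂, h1, h2, -, n, hn⟩
  have ha := cos_cubic_of_prim9 θ₁ h1
  have hb := cos_cubic_of_prim9 θ₂ h2
  set a := 2 * Real.cos θ₁ with hadef
  set b := 2 * Real.cos θ₂ with hbdef
  have ha' : a ^ 3 - 3 * a + 1 = 0 := by rw [hadef]; linear_combination ha
  have hb' : b ^ 3 - 3 * b + 1 = 0 := by rw [hbdef]; linear_combination hb
  have han : a + b = (n : ℝ) := by rw [hadef, hbdef]; linarith
  by_cases hab : a = b
  · -- n = 2a, so n³ - 12n + 8 = 0 in ℤ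
    have hnr : (n : ℝ) ^ 3 - 12 * n + 8 = 0 := by
      have h2a : (n : ℝ) = 2 * a := by rw [← han, hab]; ring
      rw [h2a]; linear_combination 8 * ha'
    have hz : n ^ 3 - 12 * n + 8 = 0 := by exact_mod_cast hnr
    -- n is even
    have heven : Even n := by
      by_contra hodd
      rw [Int.not_even_iff_odd] at hodd
      obtain ⟨k, hk⟩ := hodd.pow (n := 3)
      omega
    obtain ⟨m, hm⟩ := heven
    subst hm
    have h8 : 8 * (m * (3 - m ^ 2)) = 8 * 1 := by linear_combination -hz
    have hmz : m * (3 - m ^ 2) = 1 := by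
      exact mul_left_cancel₀ (by norm_num : (8:ℤ) ≠ 0) h8
    have hmu : IsUnit m := IsUnit.of_mul_eq_one _ hmz
    rw [Int.isUnit_iff] at hmu
    rcases hmu with rfl | rfl <;> norm_num at hmz
  · -- distinct roots: a² + ab + b² = 3, then n³ - 3n - 1 = 0 in ℤ
    have hq : a ^ 2 + a * b + b ^ 2 - 3 = 0 := by
      have h0 : (a - b) * (a ^ 2 + a * b + b ^ 2 - 3) = 0 := by
        linear_combination ha' - hb'
      rcases mul_eq_zero.mp h0 with h | h
      · exact absurd (sub_eq_zero.mp h) hab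
      · exact h
    have hnr : (n : ℝ) ^ 3 - 3 * n - 1 = 0 := by
      rw [← han]
      linear_combination (-(1:ℝ)/2) * ha' + (-(1:ℝ)/2) * hb' + ((3:ℝ)/2) * (a + b) * hq
    have hz : n ^ 3 - 3 * n - 1 = 0 := by exact_mod_cast hnr
    have hnz : n * (n ^ 2 - 3) = 1 := by linarith [hz]
    have hnu : IsUnit n := IsUnit.of_mul_eq_one _ hnz
    rw [Int.isUnit_iff] at hnu
    rcases hnu with rfl | rfl <;> norm_num at hnz
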